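/- Let t ≥ 4 be even, let R be the distinguished symmetric cycle on {1,−1}^t (R^0 = (1,…,1), R^s = R^0 with first s coordinates negated, R^{k+t} = −R^k), W(R) its subtope matrix, and P(t) as above. For 1 < i ≤ t, the vector T obtained from (1,…,1) by negating coordinates i, i+1, …, t satisfies T = (−P(t)^i)·W(R), where P(t)^i is the i-th row of P(t). -/

import Mathlib

/-- The alternating-sign Toeplitz matrix P(t). -/
def Pmat (t : ℕ) : Matrix (Fin t) (Fin t) ℝ :=
  Matrix.of fun i j =>
    if (i : ℕ) ≤ (j : ℕ) then (-1 : ℝ) ^ ((i : ℕ) + (j : ℕ))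
    else (-1 : ℝ) ^ ((i : ℕ) + (j : ℕ) + 1)

/-- The distinguished symmetric cycle R in the hypercube graph on {1,-1}^t:
    R^0 = (1,…,1); for 1 ≤ s ≤ t-1, R^s is R^0 with the first s coordinates
    negated; and R^{k+t} = -R^k for 0 ≤ k ≤ t-1. -/
def Rcyc (t : ℕ) : ℕ → Fin t → ℝ := fun s i =>
  if s < t then (if (i : ℕ) < s then -1 else 1)
  else (if (i : ℕ) < s - t then 1 else -1)

/-- The subtope matrix W(R), whose rows are S^k = (1/2)(R^k + R^{k+1}). -/
noncomputable def Wmat (t : ℕ) : Matrix (Fin t) (Fin t) ℝ :=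
  Matrix.of fun (k : Fin t) (j : Fin t) =>
    (Rcyc t (k : ℕ) j + Rcyc t ((k : ℕ) + 1) j) / 2

noncomputable def vfun (r : ℕ) : ℕ → ℝ := fun k =>
  if r ≤ k then (-1:ℝ)^(r+k+1) else (-1)^(r+k)

noncomputable def Afun (r m : ℕ) : ℝ := ∑ k ∈ Finset.range m, vfun r k

noncomputable def gfun (r c : ℕ) : ℕ → ℝ := fun n =>
  vfun r n * (if c < n then -1 else if c = n then 0 else 1)

lemma Aval1 (r m : ℕ) (hm : m ≤ r) :
    Afun r m = if Even m then 0 else (-1)^r := by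
  have h : ∀ k ∈ Finset.range m, vfun r k = (-1:ℝ)^r * (-1)^k := by
    intro k hk
    simp only [Finset.mem_range] at hk
    have : ¬ r ≤ k := by omega
    simp [vfun, this, pow_add]
  rw [Afun, Finset.sum_congr rfl h, ← Finset.mul_sum, neg_one_geom_sum]
  split_ifs <;> ring

lemma Aval2 (r m : ℕ) (hm : r ≤ m) :
    Afun r m = (if Even r then (0:ℝ) else -1) - (if Even (m-r) then 0 else 1) := by
  have h1 : Afun r m = Afun r r + ∑ k ∈ Finset.Ico r m, vfun r k := by
    rw [Afun, Afun, Finset.range_eq_Ico,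
      ← Finset.sum_Ico_consecutive _ (Nat.zero_le r) hm, ← Finset.range_eq_Ico]
  have h2 : ∑ k ∈ Finset.Ico r m, vfun r k
      = -(if Even (m-r) then 0 else 1) := by
    rw [Finset.sum_Ico_eq_sum_range]
    have h : ∀ k ∈ Finset.range (m - r), vfun r (r + k) = -((-1:ℝ)^k) := by
      intro k _
      have hle : r ≤ r + k := Nat.le_add_right _ _
      simp only [vfun, if_pos hle]
      have he : r + (r + k) + 1 = 2*r + (k+1) := by ring
      rw [he, pow_add, pow_mul, pow_succ]
      ring_nf
    rw [Finset.sum_congr rfl h, Finset.sum_neg_distrib, neg_one_geom_sum]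
  rw [h1, h2, Aval1 r r le_rfl]
  rcases Nat.even_or_odd r with he | ho
  · simp [he]
  · simp [ho, Nat.not_even_iff_odd.mpr ho, Odd.neg_one_pow ho]
    ring

lemma Pneg (t r : ℕ) (h : r < t) (k : Fin t) : -(Pmat t ⟨r,h⟩ k) = vfun r (k:ℕ) := by
  simp only [Pmat, Matrix.of_apply, vfun]
  split_ifs with h1 <;> rw [pow_succ] <;> ring

lemma Wval (t : ℕ) (k j : Fin t) :
    Wmat t k j = if (j:ℕ) < (k:ℕ) then -1 else if (j:ℕ) = (k:ℕ) then 0 else 1 := by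
  rcases k with ⟨k, hk⟩
  rcases j with ⟨j, hj⟩
  simp only [Wmat, Rcyc, Matrix.of_apply, Fin.val_mk]
  split_ifs <;> first | omega | norm_num

lemma sumg (r c t : ℕ) (hrt : r < t) (hc : c < t) :
    ∑ n ∈ Finset.range t, gfun r c n = Afun r c + Afun r (c+1) - Afun r t := by
  have hsplit : ∑ n ∈ Finset.range t, gfun r c n
      = ∑ n ∈ Finset.range (c+1), gfun r c n + ∑ n ∈ Finset.Ico (c+1) t, gfun r c n := by
    rw [Finset.range_eq_Ico, ← Finset.sum_Ico_consecutive _ (Nat.zero_le (c+1)) hc,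
      ← Finset.range_eq_Ico]
  have h1 : ∑ n ∈ Finset.range (c+1), gfun r c n = Afun r c := by
    rw [Finset.sum_range_succ]
    have hz : gfun r c c = 0 := by simp [gfun]
    rw [hz, add_zero, Afun]
    refine Finset.sum_congr rfl ?_
    intro n hn
    simp only [Finset.mem_range] at hn
    have h1 : ¬ c < n := by omega
    have h2 : ¬ c = n := by omega
    simp [gfun, h1, h2]
  have h2 : ∑ n ∈ Finset.Ico (c+1) t, gfun r c n = -(Afun r t - Afun r (c+1)) := by
    have h : ∀ n ∈ Finset.Ico (c+1) t, gfun r c n = -(vfun r n) := by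
      intro n hn
      simp only [Finset.mem_Ico] at hn
      have : c < n := by omega
      simp [gfun, this]
    rw [Finset.sum_congr rfl h, Finset.sum_neg_distrib, Afun, Afun,
      Finset.sum_Ico_eq_sub _ (by omega : c + 1 ≤ t)]
  rw [hsplit, h1, h2]; ring

theorem stmt_13 (t : ℕ) (ht : 4 ≤ t) (hev : Even t)
    (i : ℕ) (hi1 : 1 < i) (hit : i ≤ t) :
    -- _{−[i,t]}T^{(+)} = (−P(t)^i) · W(R)   (coordinates are 1-indexed: the
    -- coordinate of index c (0-indexed) is negated iff i ≤ c+1)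
    (fun c : Fin t => if i ≤ (c : ℕ) + 1 then (-1 : ℝ) else 1) =
      Matrix.vecMul (fun c => -(Pmat t ⟨i - 1, by omega⟩ c)) (Wmat t) := by
  funext c
  have hc := c.isLt
  have hrt : i - 1 < t := by omega
  have hr1 : 1 ≤ i - 1 := by omega
  rw [Matrix.vecMul, dotProduct]
  have hterm : ∀ k : Fin t,
      (-(Pmat t ⟨i - 1, by omega⟩ k)) * Wmat t k c = gfun (i-1) (c:ℕ) (k:ℕ) := by
    intro k
    rw [gfun, ← Pneg t (i-1) hrt k, Wval]
  rw [Finset.sum_congr rfl (fun k _ => hterm k),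
    Fin.sum_univ_eq_sum_range (gfun (i-1) (c:ℕ)) t,
    sumg (i-1) (c:ℕ) t hrt hc]
  -- now evaluate
  set r := i - 1 with hrdef
  have htr : Even (t - r) ↔ Even r := by
    rw [Nat.even_sub hrt.le]
    simp [hev]
  rw [Aval2 r t hrt.le]
  by_cases hcr : (c:ℕ) < r
  · have hne : ¬ i ≤ (c:ℕ) + 1 := by omega
    rw [if_neg hne, Aval1 r c hcr.le, Aval1 r ((c:ℕ)+1) hcr]
    rcases Nat.even_or_odd r with he | ho
    · have h1 : Even (t - r) := htr.mpr he
      rcases Nat.even_or_odd (c:ℕ) with hec | hoc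
      · simp [he, h1, hec, Nat.even_add_one, Even.neg_one_pow he]
      · simp [he, h1, Nat.not_even_iff_odd.mpr hoc, Nat.even_add_one,
          Even.neg_one_pow he]
    · have h1 : ¬ Even (t - r) := by
        rw [htr]; exact Nat.not_even_iff_odd.mpr ho
      rcases Nat.even_or_odd (c:ℕ) with hec | hoc
      · simp [Nat.not_even_iff_odd.mpr ho, h1, hec, Nat.even_add_one,
          Odd.neg_one_pow ho]
      · simp [Nat.not_even_iff_odd.mpr ho, h1, Nat.not_even_iff_odd.mpr hoc,
          Nat.even_add_one, Odd.neg_one_pow ho]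
  · have hle : i ≤ (c:ℕ) + 1 := by omega
    have hcr' : r ≤ (c:ℕ) := by omega
    rw [if_pos hle, Aval2 r c hcr', Aval2 r ((c:ℕ)+1) (by omega)]
    have hco : (c:ℕ) + 1 - r = ((c:ℕ) - r) + 1 := by omega
    rw [hco]
    rcases Nat.even_or_odd r with he | ho
    · have h1 : Even (t - r) := htr.mpr he
      rcases Nat.even_or_odd ((c:ℕ) - r) with hec | hoc
      · simp [he, h1, hec, Nat.even_add_one]
      · simp [he, h1, Nat.not_even_iff_odd.mpr hoc, Nat.even_add_one]
    · have h1 : ¬ Even (t - r) := by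
        rw [htr]; exact Nat.not_even_iff_odd.mpr ho
      rcases Nat.even_or_odd ((c:ℕ) - r) with hec | hoc
      · simp [Nat.not_even_iff_odd.mpr ho, h1, hec, Nat.even_add_one]
      · simp [Nat.not_even_iff_odd.mpr ho, h1, Nat.not_even_iff_odd.mpr hoc,
          Nat.even_add_one]
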